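/- Let X be a Banach space and T: M → X an isometric embedding with T(0)=0, where M ⊂ ℓ₁ as above. For each finite sign pattern θ₁,...,θ_n ∈ {−1,+1}, set A₊ = {i ≤ n : θ_i = 1}, A₋ = {i ≤ n : θ_i = −1}, x₊ = ∑_{i∈A₊} 2^i e_i, x₋ = ∑_{i∈A₋} 2^i e_i. Then any norm-one functional F ∈ X* with F(T(x₊)) − F(T(x₋)) = ∑_{i=1}^n 2^i satisfies F(2^{-j}T(2^j e_j)) = θ_j for every j ≤ n. -/

import Mathlib

open Finset

/-- Norm of a finite combination of `lp.single`s in `ℓ¹`. -/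
private lemma lp1_norm_sum_single (c : ℕ → ℝ) (A : Finset ℕ) :
    ‖∑ i ∈ A, lp.single (E := fun _ : ℕ => ℝ) 1 i (c i)‖ = ∑ i ∈ A, |c i| := by
  have h := lp.norm_sum_single (E := fun _ : ℕ => ℝ) (p := 1) (by norm_num) c A
  simpa [Real.norm_eq_abs] using h

private lemma key_norm (A : Finset ℕ) :
    ‖∑ i ∈ A, (2 : ℝ) ^ i • lp.single (E := fun _ : ℕ => ℝ) 1 i (1 : ℝ)‖
      = ∑ i ∈ A, (2 : ℝ) ^ i := by
  have h1 : ∀ i : ℕ, (2 : ℝ) ^ i • lp.single (E := fun _ : ℕ => ℝ) 1 i (1 : ℝ)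
      = lp.single (E := fun _ : ℕ => ℝ) 1 i ((2 : ℝ) ^ i) := by
    intro i
    rw [← lp.single_smul]
    norm_num
  simp_rw [h1]
  rw [lp1_norm_sum_single]
  refine Finset.sum_congr rfl fun i _ => ?_
  exact abs_of_pos (by positivity)

theorem stmt17 {X : Type*} [NormedAddCommGroup X] [NormedSpace ℝ X] [CompleteSpace X]
    (T : lp (fun _ : ℕ => ℝ) 1 → X)
    (hT : ∀ x y : lp (fun _ : ℕ => ℝ) 1,
      (∃ A : Finset ℕ, x = ∑ i ∈ A, (2 : ℝ) ^ i • lp.single 1 i (1 : ℝ)) →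
      (∃ A : Finset ℕ, y = ∑ i ∈ A, (2 : ℝ) ^ i • lp.single 1 i (1 : ℝ)) →
      dist (T x) (T y) = dist x y)
    (hT0 : T 0 = 0)
    (n : ℕ) (θ : Fin n → ℝ) (hθ : ∀ i, θ i = 1 ∨ θ i = -1)
    (F : X →L[ℝ] ℝ) (hF : ‖F‖ = 1)
    (hFval :
      F (T (∑ i ∈ Finset.univ.filter fun i : Fin n => θ i = 1,
          (2 : ℝ) ^ (i : ℕ) • lp.single 1 (i : ℕ) (1 : ℝ))) -
      F (T (∑ i ∈ Finset.univ.filter fun i : Fin n => θ i = -1,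
          (2 : ℝ) ^ (i : ℕ) • lp.single 1 (i : ℕ) (1 : ℝ))) =
        ∑ i : Fin n, (2 : ℝ) ^ (i : ℕ)) :
    ∀ j : Fin n,
      F (((2 : ℝ) ^ (j : ℕ))⁻¹ • T ((2 : ℝ) ^ (j : ℕ) • lp.single 1 (j : ℕ) (1 : ℝ))) =
        θ j := by
  classical
  -- notation
  set s : Finset ℕ → lp (fun _ : ℕ => ℝ) 1 :=
    fun A => ∑ i ∈ A, (2 : ℝ) ^ i • lp.single 1 i (1 : ℝ) with hs
  have hmem : ∀ A : Finset ℕ,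
      ∃ B : Finset ℕ, s A = ∑ i ∈ B, (2 : ℝ) ^ i • lp.single 1 i (1 : ℝ) := fun A => ⟨A, rfl⟩
  have hs0 : s ∅ = 0 := by simp [hs]
  -- norm of T at points of M
  have hTnorm : ∀ A : Finset ℕ, ‖T (s A)‖ = ∑ i ∈ A, (2 : ℝ) ^ i := by
    intro A
    have h := hT (s A) (s ∅) (hmem A) (hmem ∅)
    rw [hs0, hT0, dist_zero_right, dist_zero_right] at h
    rw [h]; exact key_norm A
  have hTdist : ∀ A B : Finset ℕ, dist (T (s A)) (T (s B)) = dist (s A) (s B) :=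
    fun A B => hT _ _ (hmem A) (hmem B)
  -- difference of nested sums
  have hdiff : ∀ (A : Finset ℕ) (j : ℕ), j ∈ A →
      dist (s A) (s {j}) = (∑ i ∈ A, (2 : ℝ) ^ i) - 2 ^ j := by
    intro A j hj
    have hsplit : s {j} + s (A.erase j) = s A := by
      simp only [hs, Finset.sum_singleton]
      exact Finset.add_sum_erase A (fun i => (2 : ℝ) ^ i • lp.single 1 i (1 : ℝ)) hj
    have : s A - s {j} = s (A.erase j) := by rw [← hsplit]; abel
    rw [dist_eq_norm, this, key_norm]
    have := Finset.add_sum_erase A (fun i => (2 : ℝ) ^ i) hj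
    linarith
  -- the positive and negative parts
  set P : Finset (Fin n) := Finset.univ.filter fun i : Fin n => θ i = 1 with hP
  set Q : Finset (Fin n) := Finset.univ.filter fun i : Fin n => θ i = -1 with hQ
  set A : Finset ℕ := P.image Fin.val with hA
  set B : Finset ℕ := Q.image Fin.val with hB
  have hxp : (∑ i ∈ P, (2 : ℝ) ^ (i : ℕ) • lp.single 1 (i : ℕ) (1 : ℝ)) = s A := by
    simp only [hs, hA]
    rw [Finset.sum_image (fun a _ b _ h => Fin.val_injective h)]
  have hxm : (∑ i ∈ Q, (2 : ℝ) ^ (i : ℕ) • lp.single 1 (i : ℕ) (1 : ℝ)) = s B := by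
    simp only [hs, hB]
    rw [Finset.sum_image (fun a _ b _ h => Fin.val_injective h)]
  have hAsum : (∑ i ∈ A, (2 : ℝ) ^ i) = ∑ i ∈ P, (2 : ℝ) ^ (i : ℕ) := by
    rw [hA, Finset.sum_image (fun a _ b _ h => Fin.val_injective h)]
  have hBsum : (∑ i ∈ B, (2 : ℝ) ^ i) = ∑ i ∈ Q, (2 : ℝ) ^ (i : ℕ) := by
    rw [hB, Finset.sum_image (fun a _ b _ h => Fin.val_injective h)]
  -- partition of the total sum
  have hQ' : Q = Finset.univ.filter fun i : Fin n => ¬ θ i = 1 := by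
    ext i
    simp only [hQ, Finset.mem_filter, Finset.mem_univ, true_and]
    rcases hθ i with h | h <;> simp [h] <;> norm_num
  have hpart : (∑ i ∈ A, (2 : ℝ) ^ i) + (∑ i ∈ B, (2 : ℝ) ^ i)
      = ∑ i : Fin n, (2 : ℝ) ^ (i : ℕ) := by
    rw [hAsum, hBsum, hQ', hP]
    exact Finset.sum_filter_add_sum_filter_not _ _ _
  -- functional bounds
  have hbound : ∀ x : X, F x ≤ ‖x‖ := by
    intro x
    calc F x ≤ |F x| := le_abs_self _
    _ ≤ ‖F‖ * ‖x‖ := F.le_opNorm x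
    _ = ‖x‖ := by rw [hF, one_mul]
  have h1 : F (T (s A)) ≤ ∑ i ∈ A, (2 : ℝ) ^ i := by
    have := hbound (T (s A)); rwa [hTnorm] at this
  have h2 : - F (T (s B)) ≤ ∑ i ∈ B, (2 : ℝ) ^ i := by
    have := hbound (-(T (s B))); rwa [map_neg, norm_neg, hTnorm] at this
  rw [hxp, hxm] at hFval
  have eq1 : F (T (s A)) = ∑ i ∈ A, (2 : ℝ) ^ i := by linarith
  have eq2 : F (T (s B)) = -(∑ i ∈ B, (2 : ℝ) ^ i) := by linarith
  -- main argument
  intro j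
  have hvmem : ((2 : ℝ) ^ (j : ℕ) • lp.single 1 (j : ℕ) (1 : ℝ)) = s {(j : ℕ)} := by
    simp only [hs, Finset.sum_singleton]
  rw [hvmem]
  have hvnorm : ‖T (s {(j : ℕ)})‖ = 2 ^ (j : ℕ) := by
    rw [hTnorm, Finset.sum_singleton]
  have h2j : (0 : ℝ) < 2 ^ (j : ℕ) := by positivity
  rcases hθ j with hθj | hθj
  · -- θ j = 1 : j ∈ A
    have hjA : (j : ℕ) ∈ A := by
      rw [hA]
      exact Finset.mem_image_of_mem _ (by simp [hP, hθj])
    have hlow : F (T (s A)) - F (T (s {(j : ℕ)}))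
        ≤ (∑ i ∈ A, (2 : ℝ) ^ i) - 2 ^ (j : ℕ) := by
      have := hbound (T (s A) - T (s {(j : ℕ)}))
      rw [map_sub, ← dist_eq_norm, hTdist, hdiff A _ hjA] at this
      exact this
    have hup : F (T (s {(j : ℕ)})) ≤ 2 ^ (j : ℕ) := by
      have := hbound (T (s {(j : ℕ)})); rwa [hvnorm] at this
    have heq : F (T (s {(j : ℕ)})) = 2 ^ (j : ℕ) := by linarith
    rw [map_smul, smul_eq_mul, heq, inv_mul_cancel₀ h2j.ne', hθj]
  · -- θ j = -1 : j ∈ B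
    have hjB : (j : ℕ) ∈ B := by
      rw [hB]
      exact Finset.mem_image_of_mem _ (by simp [hQ, hθj])
    have hlow : F (T (s {(j : ℕ)})) - F (T (s B))
        ≤ (∑ i ∈ B, (2 : ℝ) ^ i) - 2 ^ (j : ℕ) := by
      have := hbound (T (s {(j : ℕ)}) - T (s B))
      rw [map_sub, ← dist_eq_norm, hTdist] at this
      rw [dist_comm, hdiff B _ hjB] at this
      exact this
    have hup : - F (T (s {(j : ℕ)})) ≤ 2 ^ (j : ℕ) := by
      have := hbound (-(T (s {(j : ℕ)}))); rwa [map_neg, norm_neg, hvnorm] at this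
    have heq : F (T (s {(j : ℕ)})) = -(2 ^ (j : ℕ)) := by linarith
    rw [map_smul, smul_eq_mul, heq, hθj]
    field_simp
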